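/- If σ is a uniform strategy profile on a game with bisimulation equivalence ∼ respecting the partition, and h, h' are histories from v₀ with h ∼ h' (componentwise), then the outcomes of the induced strategy profiles in the subgames after h and h' are componentwise bisimilar: Out(σ_{|h})(last(h))ₙ ∼ Out(σ_{|h'})(last(h'))ₙ for all n ∈ ℕ. -/

import Mathlib

/-- A history: a finite path starting at `v0`. -/
def IsHist {V : Type} (E : V → V → Prop) (v0 : V) (h : List V) : Prop :=
  h.head? = some v0 ∧ h.Chain' E

/-- Last vertex of a history (with default `v0`). -/
def lastOf {V : Type} (v0 : V) (h : List V) : V := h.getLast?.getD v0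

/-- A strategy profile `σ : P → List V → V` is valid if on every history it
proposes a successor of the last vertex. -/
def ValidProfile {V P : Type} (E : V → V → Prop) (owner : V → P) (v0 : V)
    (σ : P → List V → V) : Prop :=
  ∀ h, IsHist E v0 h → E (lastOf v0 h) (σ (owner (lastOf v0 h)) h)

/-- The successive histories produced by playing `σ` after the history `h0`. -/
def outHistFrom {V P : Type} (owner : V → P) (σ : P → List V → V) (v0 : V) (h0 : List V) :
    ℕ → List V
  | 0 => h0
  | n + 1 =>
      outHistFrom owner σ v0 h0 n ++
        [σ (owner (lastOf v0 (outHistFrom owner σ v0 h0 n))) (outHistFrom owner σ v0 h0 n)]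

/-- The infinite play obtained by the history `h0` followed by the outcome of `σ`. -/
def playFrom {V P : Type} (owner : V → P) (σ : P → List V → V) (v0 : V) (h0 : List V)
    (n : ℕ) : V :=
  (outHistFrom owner σ v0 h0 (n + 1)).getD n v0

/-- The outcome of the strategy profile `σ` from `v0`. -/
def outcomeSeq {V P : Type} (owner : V → P) (σ : P → List V → V) (v0 : V) : ℕ → V :=
  playFrom owner σ v0 [v0]

/-- `σ` is a Nash equilibrium from `v0`: no player has a profitable deviation. -/
def IsNE {V P : Type} [DecidableEq P] (E : V → V → Prop) (owner : V → P) (v0 : V)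
    (Gain : P → (ℕ → V) → Prop) (σ : P → List V → V) : Prop :=
  ∀ (i : P) (σ' : List V → V), (∀ h, IsHist E v0 h → E (lastOf v0 h) (σ' h)) →
    Gain i (outcomeSeq owner (Function.update σ i σ') v0) → Gain i (outcomeSeq owner σ v0)

/-- `σ` is a subgame perfect equilibrium from `v0`: after every history, no player has a
profitable deviation (gains being evaluated on the full play extending the history). -/
def IsSPE {V P : Type} [DecidableEq P] (E : V → V → Prop) (owner : V → P) (v0 : V)
    (Gain : P → (ℕ → V) → Prop) (σ : P → List V → V) : Prop :=
  ∀ h0, IsHist E v0 h0 →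
    ∀ (i : P) (σ' : List V → V), (∀ h, IsHist E v0 h → E (lastOf v0 h) (σ' h)) →
      Gain i (playFrom owner (Function.update σ i σ') v0 h0) →
      Gain i (playFrom owner σ v0 h0)

/-- `σ` is uniform w.r.t. the relation `r`: on componentwise `r`-related histories,
each player's choices are `r`-related. -/
def Uniform {V P : Type} (E : V → V → Prop) (v0 : V) (r : V → V → Prop)
    (σ : P → List V → V) : Prop :=
  ∀ (i : P) (h h' : List V), IsHist E v0 h → IsHist E v0 h' → List.Forall₂ r h h' →
    r (σ i h) (σ i h')

/-- Edges of the quotient game. -/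
def QEdge {V : Type} (s : Setoid V) (E : V → V → Prop) :
    Quotient s → Quotient s → Prop :=
  fun c c' => ∃ v v', Quotient.mk s v = c ∧ Quotient.mk s v' = c' ∧ E v v'

theorem aux_len {V P : Type} (owner : V → P) (σ : P → List V → V) (v0 : V) (h0 : List V) :
    ∀ n, (outHistFrom owner σ v0 h0 n).length = h0.length + n := by
  intro n; induction n with
  | zero => rfl
  | succ n ih => simp [outHistFrom, ih]; omega

theorem aux_ne {V : Type} {E : V → V → Prop} {v0 : V} {h : List V} (hh : IsHist E v0 h) :
    h ≠ [] := by
  intro e; rw [e] at hh; simp [IsHist] at hh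

theorem aux_hist {V P : Type} (E : V → V → Prop) (owner : V → P) (v0 : V)
    (σ : P → List V → V) (hvalid : ValidProfile E owner v0 σ) {h0 : List V}
    (hh : IsHist E v0 h0) : ∀ n, IsHist E v0 (outHistFrom owner σ v0 h0 n) := by
  intro n; induction n with
  | zero => exact hh
  | succ n ih =>
    obtain ⟨ih1, ih2⟩ := ih
    have hne : outHistFrom owner σ v0 h0 n ≠ [] := aux_ne ⟨ih1, ih2⟩
    constructor
    · rw [outHistFrom, List.head?_append]
      cases e : (outHistFrom owner σ v0 h0 n).head? with
      | none => exact absurd (List.head?_eq_none_iff.mp e) hne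
      | some a => rw [e] at ih1; simpa using ih1
    · rw [outHistFrom, List.Chain', List.isChain_append]
      refine ⟨ih2, List.isChain_singleton _, ?_⟩
      intro x hx y hy
      simp at hy; subst hy
      have hl : (outHistFrom owner σ v0 h0 n).getLast? =
          some (lastOf v0 (outHistFrom owner σ v0 h0 n)) := by
        cases e : (outHistFrom owner σ v0 h0 n).getLast? with
        | none => exact absurd (List.getLast?_eq_none_iff.mp e) hne
        | some a => simp [lastOf, e]
      rw [hl] at hx; simp at hx; subst hx
      exact hvalid _ ⟨ih1, ih2⟩

theorem aux_last_rel {V : Type} {r : V → V → Prop} (v0 : V) :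
    ∀ {l l' : List V}, List.Forall₂ r l l' → l ≠ [] → r (lastOf v0 l) (lastOf v0 l') := by
  intro l l' hrel
  induction hrel with
  | nil => intro hc; exact absurd rfl hc
  | @cons a b l l' hab htl ih =>
    intro _
    cases htl with
    | nil => simpa [lastOf] using hab
    | @cons a' b' t t' h1 h2 =>
      have := ih (by simp)
      simpa [lastOf, List.getLast?_cons_cons] using this

theorem aux_getD_rel {V : Type} {r : V → V → Prop} (d d' : V) :
    ∀ {l l' : List V}, List.Forall₂ r l l' → ∀ k, k < l.length →
      r (l.getD k d) (l'.getD k d') := by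
  intro l l' hrel
  induction hrel with
  | nil => intro k hk; simp at hk
  | cons hab htl ih =>
    intro k hk
    cases k with
    | zero => simpa using hab
    | succ k => simp only [List.getD_cons_succ]; exact ih k (by simpa using hk)

theorem aux_app {α : Type*} {r : α → α → Prop} {a b c d : List α}
    (h1 : List.Forall₂ r a b) (h2 : List.Forall₂ r c d) :
    List.Forall₂ r (a ++ c) (b ++ d) := by
  induction h1 with
  | nil => exact h2
  | cons hab htl ih => exact List.Forall₂.cons hab ih

theorem aux_rel {V P : Type} (E : V → V → Prop) (owner : V → P) (v0 : V)
    {r : V → V → Prop} (hpart : ∀ v v', r v v' → owner v = owner v')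
    (σ : P → List V → V) (hvalid : ValidProfile E owner v0 σ)
    (hunif : Uniform E v0 r σ)
    {h h' : List V} (hh : IsHist E v0 h) (hh' : IsHist E v0 h')
    (hrel : List.Forall₂ r h h') :
    ∀ n, List.Forall₂ r (outHistFrom owner σ v0 h n) (outHistFrom owner σ v0 h' n) := by
  intro n; induction n with
  | zero => exact hrel
  | succ n ih =>
    have H := aux_hist E owner v0 σ hvalid hh n
    have H' := aux_hist E owner v0 σ hvalid hh' n
    have hlast := aux_last_rel v0 ih (aux_ne H)
    have howner := hpart _ _ hlast
    rw [outHistFrom]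
    refine aux_app ih ?_
    rw [howner]
    exact List.forall₂_cons.mpr ⟨hunif _ _ _ H H' ih, List.Forall₂.nil⟩

theorem aux_stable {V P : Type} (owner : V → P) (σ : P → List V → V) (v0 : V) (h0 : List V)
    (n k : ℕ) (hk : k < (outHistFrom owner σ v0 h0 n).length) :
    ∀ m, (outHistFrom owner σ v0 h0 (n + m)).getD k v0 =
      (outHistFrom owner σ v0 h0 n).getD k v0 := by
  intro m; induction m with
  | zero => rfl
  | succ m ih =>
    have : n + (m + 1) = (n + m) + 1 := by omega
    rw [this, outHistFrom, List.getD_append]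
    · exact ih
    · have := aux_len owner σ v0 h0 n
      have := aux_len owner σ v0 h0 (n + m)
      omega

/-- If `σ` is a uniform strategy profile and `h ∼ h'` are componentwise bisimilar
histories from `v₀`, the outcomes of the residual profiles in the subgames after `h`
and `h'` are componentwise bisimilar.  (The residual outcome after `h` is the suffix of
`playFrom … h` starting at position `|h| - 1`, i.e. at `last(h)`.) -/
theorem stmt17 {V P : Type} (E : V → V → Prop) (owner : V → P) (v0 : V)
    (s : Setoid V)
    (hbisim : ∀ v v' w, s.r v v' → E v w → ∃ w', E v' w' ∧ s.r w w')
    (hpart : ∀ v v', s.r v v' → owner v = owner v')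
    (htotal : ∀ v : V, ∃ v', E v v')
    (σ : P → List V → V)
    (hvalid : ValidProfile E owner v0 σ)
    (hunif : Uniform E v0 s.r σ)
    (h h' : List V) (hh : IsHist E v0 h) (hh' : IsHist E v0 h')
    (hrel : List.Forall₂ s.r h h') :
    ∀ n, s.r (playFrom owner σ v0 h (h.length - 1 + n))
             (playFrom owner σ v0 h' (h'.length - 1 + n)) := by
  intro n
  have hne := aux_ne hh
  have hlen : h.length = h'.length := hrel.length_eq
  have h1 : 1 ≤ h.length := by
    cases h with
    | nil => exact absurd rfl hne
    | cons a t => simp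
  have e : h.length - 1 + n + 1 = (n + 1) + (h.length - 1) := by omega
  have e' : h'.length - 1 + n + 1 = (n + 1) + (h'.length - 1) := by omega
  have hk : h.length - 1 + n < (outHistFrom owner σ v0 h (n + 1)).length := by
    rw [aux_len]; omega
  have hk' : h'.length - 1 + n < (outHistFrom owner σ v0 h' (n + 1)).length := by
    rw [aux_len]; omega
  rw [playFrom, playFrom, e, e',
    aux_stable owner σ v0 h (n + 1) _ hk (h.length - 1),
    aux_stable owner σ v0 h' (n + 1) _ hk' (h'.length - 1)]
  rw [show h'.length - 1 + n = h.length - 1 + n by omega]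
  exact aux_getD_rel v0 v0 (aux_rel E owner v0 hpart σ hvalid hunif hh hh' hrel (n + 1))
    _ hk
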